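/- For every α ∈ (0,1) there exist a dimension n, a positive integer d ≥ 2, matrices A ∈ ℝ^{(d+3)×n} and B ∈ ℝ^{(d+1)×n} such that B consists of the last d+1 rows of A, and a row vector c ∈ ℝ^{1×n}, with the following properties, where f(M) := inf{ ‖M−X‖_F : X a real matrix of the same dimensions as M with rank(X) ≤ 2 } denotes the best rank-2 Frobenius approximation error and M∘c denotes appending the row c to M: f(A) ≥ f(B) ≥ (1−α)·f(A) > 0, and yet f(B∘c) ≤ (1/2)·f(A∘c). Hence the best rank-2 approximation error is not an (α′,β)-smooth function for any α′ ≤ 1/2 and 0 < β ≤ α′: a suffix can be a (1−α)-approximation of the whole stream while failing to remain even a 1/2-approximation after new rows arrive. -/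

import Mathlib

open Matrix

/-- The Frobenius norm of a real matrix. -/
noncomputable def frobNorm {α β : Type*} [Fintype α] [Fintype β]
    (M : Matrix α β ℝ) : ℝ :=
  Real.sqrt (∑ i, ∑ j, (M i j) ^ 2)

/-- The best rank-2 Frobenius approximation error of a real matrix. -/
noncomputable def rank2Err {α β : Type*} [Fintype α] [Fintype β]
    (M : Matrix α β ℝ) : ℝ :=
  sInf {e : ℝ | ∃ X : Matrix α β ℝ, X.rank ≤ 2 ∧ e = frobNorm (M - X)}

namespace LNS

open RealInnerProductSpace

variable {β : Type*} [Fintype β] {n : ℕ}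

def pat (n : ℕ) (s : β → ℝ) (σ : β → Fin n) : Matrix β (Fin n) ℝ :=
  Matrix.of fun i j => if j = σ i then s i else 0

lemma rank2Err_le (M X : Matrix β (Fin n) ℝ) (hX : X.rank ≤ 2) :
    rank2Err M ≤ frobNorm (M - X) := by
  apply csInf_le
  · exact ⟨0, by rintro e ⟨Y, _, rfl⟩; exact Real.sqrt_nonneg _⟩
  · exact ⟨X, hX, rfl⟩

lemma le_rank2Err (M : Matrix β (Fin n) ℝ) (L : ℝ)
    (hL : ∀ X : Matrix β (Fin n) ℝ, X.rank ≤ 2 → L ≤ frobNorm (M - X)) :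
    L ≤ rank2Err M := by
  apply le_csInf
  · exact ⟨frobNorm (M - 0), 0, by simp [Matrix.rank_zero], rfl⟩
  · rintro e ⟨X, hX, rfl⟩; exact hL X hX

lemma rank_ite_le_card [DecidableEq β] (M : Matrix β (Fin n) ℝ) (K : Finset β) :
    (Matrix.of fun i j => if i ∈ K then M i j else 0 : Matrix β (Fin n) ℝ).rank ≤ K.card := by
  set X : Matrix β (Fin n) ℝ := Matrix.of fun i j => if i ∈ K then M i j else 0 with hXdef
  rw [Matrix.rank_eq_finrank_span_row]
  have hsub : Set.range X ⊆ insert 0 ↑(K.image X) := by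
    rintro - ⟨i, rfl⟩
    by_cases h : i ∈ K
    · exact Set.mem_insert_iff.2 (Or.inr (Finset.mem_coe.2 (Finset.mem_image_of_mem X h)))
    · left
      funext j
      simp [hXdef, h]
  calc Module.finrank ℝ (Submodule.span ℝ (Set.range X))
      ≤ Module.finrank ℝ (Submodule.span ℝ (insert 0 ↑(K.image X) : Set (Fin n → ℝ))) := by
        apply Submodule.finrank_mono
        exact Submodule.span_mono hsub
    _ = Module.finrank ℝ (Submodule.span ℝ (↑(K.image X) : Set (Fin n → ℝ))) := by
        rw [Submodule.span_insert_zero]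
    _ ≤ (K.image X).card := finrank_span_finset_le_card _
    _ ≤ K.card := Finset.card_image_le

lemma rank2Err_pat_upper [DecidableEq β] (s : β → ℝ) (σ : β → Fin n)
    (K : Finset β) (hK : K.card ≤ 2) :
    rank2Err (pat n s σ) ≤ Real.sqrt (∑ i, if i ∈ K then 0 else s i ^ 2) := by
  set M := pat n s σ
  set X : Matrix β (Fin n) ℝ := Matrix.of fun i j => if i ∈ K then M i j else 0 with hXdef
  have hX : X.rank ≤ 2 := (rank_ite_le_card M K).trans hK
  refine (rank2Err_le M X hX).trans ?_
  apply le_of_eq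
  unfold frobNorm
  congr 1
  apply Finset.sum_congr rfl
  intro i _
  by_cases h : i ∈ K
  · have : ∀ j, (M - X) i j ^ 2 = 0 := by intro j; simp [hXdef, h]
    rw [Finset.sum_congr rfl fun j _ => this j]
    simp [h]
  · simp only [hXdef, h, if_false]
    have : ∀ j, (M - X) i j ^ 2 = (if j = σ i then s i else 0) ^ 2 := by
      intro j; simp [hXdef, h, M, pat]
    rw [Finset.sum_congr rfl fun j _ => this j]
    simp [Finset.sum_ite_eq']


lemma normsq {ι : Type*} [Fintype ι] (v : EuclideanSpace ℝ ι) : ‖v‖ ^ 2 = ∑ j, v j ^ 2 := by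
  rw [EuclideanSpace.norm_eq, Real.sq_sqrt (by positivity)]
  simp [sq_abs]

set_option maxHeartbeats 1000000 in
lemma pat_lower (s : β → ℝ) (σ : β → Fin n) (hσ : Function.Injective σ)
    (T : ℝ) (hT : ∀ c : β → ℝ, (∀ i, 0 ≤ c i) → (∀ i, c i ≤ 1) → (∑ i, c i) ≤ 2 →
      ∑ i, s i ^ 2 * c i ≤ T)
    (X : Matrix β (Fin n) ℝ) (hX : X.rank ≤ 2) :
    (∑ i, s i ^ 2) - T ≤ ∑ i, ∑ j, (pat n s σ i j - X i j) ^ 2 := by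
  classical
  set W : Submodule ℝ (EuclideanSpace ℝ (Fin n)) := Submodule.span ℝ (Set.range fun i => (WithLp.toLp 2 (X i) : EuclideanSpace ℝ (Fin n))) with hWdef
  have hW : Module.finrank ℝ W ≤ 2 := by
    have h1 : W = (Submodule.span ℝ (Set.range X.row)).map (WithLp.linearEquiv 2 ℝ (Fin n → ℝ)).symm.toLinearMap := by
      rw [Submodule.map_span, ← Set.range_comp]; rfl
    rw [h1, LinearEquiv.finrank_map_eq]; exact X.rank_eq_finrank_span_row ▸ hX
  haveI : CompleteSpace W := FiniteDimensional.complete ℝ W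
  set P := W.orthogonalProjectionOnto with hP
  -- Pythagoras: for x ∈ W
  have pyth : ∀ (v : EuclideanSpace ℝ (Fin n)), ∀ x ∈ W, ‖v - x‖ ^ 2 = ‖v - (P v : EuclideanSpace ℝ (Fin n))‖ ^ 2 + ‖(P v : EuclideanSpace ℝ (Fin n)) - x‖ ^ 2 := by
    intro v x hx
    have hdecomp : v - x = (v - (P v : EuclideanSpace ℝ (Fin n))) + ((P v : EuclideanSpace ℝ (Fin n)) - x) := by abel
    rw [hdecomp, norm_add_sq_real, (show ⟪v - (P v : EuclideanSpace ℝ (Fin n)), (P v : EuclideanSpace ℝ (Fin n)) - x⟫ = 0 from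
      Submodule.starProjection_inner_eq_zero (K := W) v _ (Submodule.sub_mem W (P v).2 hx))]
    ring
  have key : ∀ (v : EuclideanSpace ℝ (Fin n)), ∀ x ∈ W, ‖v‖ ^ 2 - ‖(P v : EuclideanSpace ℝ (Fin n))‖ ^ 2 ≤ ‖v - x‖ ^ 2 := by
    intro v x hx
    have h0 := pyth v 0 (Submodule.zero_mem W)
    have h1 := pyth v x hx
    simp only [sub_zero] at h0
    nlinarith [sq_nonneg ‖(P v : EuclideanSpace ℝ (Fin n)) - x‖, sq_nonneg ‖(P v : EuclideanSpace ℝ (Fin n))‖]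
  -- rows
  set e : Fin n → EuclideanSpace ℝ (Fin n) := fun j => EuclideanSpace.single j 1 with he
  set x : β → EuclideanSpace ℝ (Fin n) := fun i => WithLp.toLp 2 (X i) with hx
  set m : β → EuclideanSpace ℝ (Fin n) := fun i => s i • e (σ i) with hm
  have hXmem : ∀ i, x i ∈ W := fun i => Submodule.subset_span ⟨i, rfl⟩
  have hrow : ∀ i, ∑ j, (pat n s σ i j - X i j) ^ 2 = ‖m i - x i‖ ^ 2 := by
    intro i
    rw [normsq]
    apply Finset.sum_congr rfl
    intro j _
    congr 1
    simp only [hm, he, hx, PiLp.sub_apply, PiLp.smul_apply, EuclideanSpace.single_apply,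
      smul_eq_mul, mul_ite, mul_one, mul_zero]
    rfl
  -- the coefficients
  set c : Fin n → ℝ := fun j => ‖(P (e j) : EuclideanSpace ℝ (Fin n))‖ ^ 2 with hc
  have hc0 : ∀ j, 0 ≤ c j := by intro j; simp only [hc]; positivity
  have hnorme : ∀ j, ‖e j‖ = 1 := by
    intro j; simp [he, EuclideanSpace.norm_single]
  have hc1 : ∀ j, c j ≤ 1 := by
    intro j
    have hk := pyth (e j) 0 (Submodule.zero_mem W)
    simp only [sub_zero] at hk
    have h1 : ‖e j‖ ^ 2 = 1 := by rw [hnorme]; norm_num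
    simp only [hc]
    linarith [hk, h1, sq_nonneg ‖e j - ((P (e j) : EuclideanSpace ℝ (Fin n)))‖]
  -- sum of coefficients at most 2
  have hcsum : ∑ j, c j ≤ 2 := by
    set b := stdOrthonormalBasis ℝ W with hb
    have hwsq : ∀ w : W, ‖(w : EuclideanSpace ℝ (Fin n))‖ ^ 2 = ∑ k, (b.repr w k) ^ 2 := by
      intro w
      rw [Submodule.norm_coe, ← b.repr.norm_map w]
      exact normsq (b.repr w)
    have hPinner : ∀ (v : EuclideanSpace ℝ (Fin n)) (k), b.repr (P v) k = ⟪(b k : EuclideanSpace ℝ (Fin n)), v⟫ := by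
      intro v k
      rw [b.repr_apply_apply]
      have h0 := Submodule.starProjection_inner_eq_zero (K := W) v (b k : EuclideanSpace ℝ (Fin n)) (b k).2
      have : ⟪(b k : EuclideanSpace ℝ (Fin n)), v - (P v : EuclideanSpace ℝ (Fin n))⟫ = 0 := by
        rw [real_inner_comm]; exact h0
      rw [inner_sub_right] at this
      have := sub_eq_zero.mp this
      rw [Submodule.coe_inner]
      exact this.symm
    have hinner_e : ∀ (k) (j), ⟪(b k : EuclideanSpace ℝ (Fin n)), e j⟫ = (b k : EuclideanSpace ℝ (Fin n)) j := by
      intro k j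
      rw [real_inner_comm, he]
      simp [EuclideanSpace.inner_single_left]
    have hcval : ∀ j, c j = ∑ k, ((b k : EuclideanSpace ℝ (Fin n)) j) ^ 2 := by
      intro j
      simp only [hc]
      rw [hwsq (P (e j))]
      apply Finset.sum_congr rfl
      intro k _
      rw [hPinner (e j) k, hinner_e]
    calc ∑ j, c j = ∑ j, ∑ k, ((b k : EuclideanSpace ℝ (Fin n)) j) ^ 2 := Finset.sum_congr rfl fun j _ => hcval j
      _ = ∑ k, ∑ j, ((b k : EuclideanSpace ℝ (Fin n)) j) ^ 2 := Finset.sum_comm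
      _ = ∑ k : Fin (Module.finrank ℝ W), (1:ℝ) := by
          apply Finset.sum_congr rfl
          intro k _
          rw [← normsq]
          rw [Submodule.norm_coe, b.orthonormal.1 k]
          norm_num
      _ = (Module.finrank ℝ W : ℝ) := by simp
      _ ≤ 2 := by exact_mod_cast hW
  -- apply hT to pulled-back coefficients
  have hcomp : ∑ i, c (σ i) ≤ 2 := by
    calc ∑ i, c (σ i) = ∑ j ∈ Finset.univ.image σ, c j :=
          (Finset.sum_image (fun a _ b _ h => hσ h)).symm
      _ ≤ ∑ j, c j := Finset.sum_le_sum_of_subset_of_nonneg (Finset.subset_univ _)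
          (fun j _ _ => hc0 j)
      _ ≤ 2 := hcsum
  have hTapp : ∑ i, s i ^ 2 * c (σ i) ≤ T :=
    hT (fun i => c (σ i)) (fun i => hc0 _) (fun i => hc1 _) hcomp
  -- per-row bound
  have hrowbound : ∀ i, s i ^ 2 - s i ^ 2 * c (σ i) ≤ ∑ j, (pat n s σ i j - X i j) ^ 2 := by
    intro i
    rw [hrow i]
    have hmn : ‖m i‖ ^ 2 = s i ^ 2 := by
      simp only [hm]
      rw [norm_smul, hnorme, mul_one, Real.norm_eq_abs, sq_abs]
    have hPm : ‖(P (m i) : EuclideanSpace ℝ (Fin n))‖ ^ 2 = s i ^ 2 * c (σ i) := by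
      simp only [hm, hc]
      rw [P.map_smul, Submodule.coe_smul, norm_smul, Real.norm_eq_abs, mul_pow, sq_abs]
    calc s i ^ 2 - s i ^ 2 * c (σ i) = ‖m i‖ ^ 2 - ‖(P (m i) : EuclideanSpace ℝ (Fin n))‖ ^ 2 := by rw [hmn, hPm]
      _ ≤ ‖m i - x i‖ ^ 2 := key (m i) (x i) (hXmem i)
  calc (∑ i, s i ^ 2) - T ≤ (∑ i, s i ^ 2) - ∑ i, s i ^ 2 * c (σ i) := by linarith
    _ = ∑ i, (s i ^ 2 - s i ^ 2 * c (σ i)) := by rw [Finset.sum_sub_distrib]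
    _ ≤ ∑ i, ∑ j, (pat n s σ i j - X i j) ^ 2 := Finset.sum_le_sum fun i _ => hrowbound i



lemma rank2Err_pat_lower (s : β → ℝ) (σ : β → Fin n) (hσ : Function.Injective σ)
    (T L : ℝ) (hT : ∀ c : β → ℝ, (∀ i, 0 ≤ c i) → (∀ i, c i ≤ 1) → (∑ i, c i) ≤ 2 →
      ∑ i, s i ^ 2 * c i ≤ T)
    (hL : L ≤ (∑ i, s i ^ 2) - T) :
    Real.sqrt L ≤ rank2Err (pat n s σ) := by
  apply le_rank2Err
  intro X hX
  unfold frobNorm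
  apply Real.sqrt_le_sqrt
  calc L ≤ (∑ i, s i ^ 2) - T := hL
    _ ≤ ∑ i, ∑ j, (pat n s σ i j - X i j) ^ 2 := pat_lower s σ hσ T hT X hX
    _ = ∑ i, ∑ j, (pat n s σ - X) i j ^ 2 := by simp [Matrix.sub_apply]

lemma sum_sq_mul_le [DecidableEq β] (K : Finset β) (v : ℝ) (hv : 1 ≤ v)
    (c : β → ℝ) (h0 : ∀ i, 0 ≤ c i) (h1 : ∀ i, c i ≤ 1) (h2 : ∑ i, c i ≤ 2) :
    ∑ i, (if i ∈ K then v else 1) ^ 2 * c i ≤ 2 + min (K.card : ℝ) 2 * (v ^ 2 - 1) := by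
  have hKc : ∑ i ∈ K, c i ≤ min (K.card : ℝ) 2 := by
    apply le_min
    · calc ∑ i ∈ K, c i ≤ ∑ i ∈ K, 1 := Finset.sum_le_sum fun i _ => h1 i
        _ = K.card := by simp
    · calc ∑ i ∈ K, c i ≤ ∑ i, c i :=
          Finset.sum_le_sum_of_subset_of_nonneg (K.subset_univ) (fun i _ _ => h0 i)
        _ ≤ 2 := h2
  have expand : ∀ i, (if i ∈ K then v else 1) ^ 2 * c i
      = c i + (if i ∈ K then (v ^ 2 - 1) * c i else 0) := by
    intro i; by_cases h : i ∈ K <;> simp [h] <;> ring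
  rw [Finset.sum_congr rfl fun i _ => expand i, Finset.sum_add_distrib]
  have h3 : ∑ i, (if i ∈ K then (v ^ 2 - 1) * c i else 0) = ∑ i ∈ K, (v ^ 2 - 1) * c i := by
    rw [Finset.sum_ite_mem, Finset.univ_inter]
  rw [h3, ← Finset.mul_sum]
  have hv2 : 0 ≤ v ^ 2 - 1 := by nlinarith
  have := mul_le_mul_of_nonneg_left hKc hv2
  linarith

lemma sum_sq_ite [DecidableEq β] (K : Finset β) (v : ℝ) :
    ∑ i, (if i ∈ K then v else (1:ℝ)) ^ 2 = Fintype.card β + K.card * (v ^ 2 - 1) := by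
  have h : ∀ i, (if i ∈ K then v else (1:ℝ)) ^ 2 = 1 + (if i ∈ K then v ^ 2 - 1 else 0) := by
    intro i; by_cases h : i ∈ K <;> simp [h]
  rw [Finset.sum_congr rfl fun i _ => h i, Finset.sum_add_distrib,
    Finset.sum_ite_mem, Finset.univ_inter, Finset.sum_const, Finset.sum_const]
  simp [nsmul_eq_mul, Finset.card_univ, mul_comm]

lemma sum_ite_zero [DecidableEq β] (K Kb : Finset β) (hsub : Kb ⊆ K) (v : ℝ) :
    ∑ i, (if i ∈ K then (0:ℝ) else (if i ∈ Kb then v else 1) ^ 2)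
      = (Fintype.card β : ℝ) - K.card := by
  have h : ∀ i, (if i ∈ K then (0:ℝ) else (if i ∈ Kb then v else 1) ^ 2)
      = 1 - (if i ∈ K then 1 else 0) := by
    intro i
    by_cases h : i ∈ K
    · simp [h]
    · have hb : i ∉ Kb := fun hx => h (hsub hx)
      simp [h, hb]
  rw [Finset.sum_congr rfl fun i _ => h i, Finset.sum_sub_distrib,
    Finset.sum_ite_mem, Finset.univ_inter, Finset.sum_const, Finset.sum_const]
  simp [Finset.card_univ]

lemma lower_K [DecidableEq β] (K : Finset β) (σ : β → Fin n) (hσ : Function.Injective σ)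
    (v : ℝ) (hv : 1 ≤ v) (L : ℝ)
    (hL : L ≤ (Fintype.card β : ℝ) + (K.card : ℝ) * (v ^ 2 - 1)
      - (2 + min (K.card : ℝ) 2 * (v ^ 2 - 1))) :
    Real.sqrt L ≤ rank2Err (pat n (fun i => if i ∈ K then v else 1) σ) := by
  apply rank2Err_pat_lower _ _ hσ (2 + min (K.card : ℝ) 2 * (v ^ 2 - 1)) L
  · intro c h0 h1 h2
    exact sum_sq_mul_le K v hv c h0 h1 h2
  · rw [sum_sq_ite K v]
    exact hL

lemma upper_K [DecidableEq β] (K Kb : Finset β) (hsub : Kb ⊆ K) (hK : K.card ≤ 2)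
    (σ : β → Fin n) (v : ℝ) :
    rank2Err (pat n (fun i => if i ∈ Kb then v else 1) σ)
      ≤ Real.sqrt ((Fintype.card β : ℝ) - K.card) := by
  have h := rank2Err_pat_upper (fun i => if i ∈ Kb then v else 1) σ K hK
  rw [sum_ite_zero K Kb hsub v] at h
  exact h

lemma fromRows_pat {β1 β2 : Type*} [Fintype β1] [Fintype β2]
    (s1 : β1 → ℝ) (s2 : β2 → ℝ) (σ1 : β1 → Fin n) (σ2 : β2 → Fin n) :
    Matrix.fromRows (pat n s1 σ1) (pat n s2 σ2) = pat n (Sum.elim s1 s2) (Sum.elim σ1 σ2) := by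
  funext i j
  cases i <;> rfl

end LNS

/-- **Low-rank approximation is not smooth.**
For every `α ∈ (0,1)` there are matrices `A ∈ ℝ^{(d+3)×n}` and `B ∈ ℝ^{(d+1)×n}`, with `B`
the last `d+1` rows of `A`, and a row `c`, such that
`f(A) ≥ f(B) ≥ (1-α)·f(A) > 0` and yet `f(B∘c) ≤ (1/2)·f(A∘c)`,
where `f` is the best rank-2 Frobenius approximation error. -/
theorem lowrank_not_smooth (α : ℝ) (hα0 : 0 < α) (hα1 : α < 1) :
    ∃ (n d : ℕ) (_ : 2 ≤ d)
      (A : Matrix (Fin (d + 3)) (Fin n) ℝ) (B : Matrix (Fin (d + 1)) (Fin n) ℝ)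
      (c : Matrix (Fin 1) (Fin n) ℝ),
      (∀ i : Fin (d + 1), B i = A (i.addNat 2)) ∧
      rank2Err B ≤ rank2Err A ∧
      (1 - α) * rank2Err A ≤ rank2Err B ∧
      0 < (1 - α) * rank2Err A ∧
      rank2Err (Matrix.fromRows B c) ≤ (1 / 2) * rank2Err (Matrix.fromRows A c) := by
  classical
  obtain ⟨d, hd2, hdα⟩ : ∃ d : ℕ, 2 ≤ d ∧ 2 ≤ α * d := by
    refine ⟨max 2 ⌈2/α⌉₊, le_max_left _ _, ?_⟩
    have h1 : (2:ℝ)/α ≤ ⌈2/α⌉₊ := Nat.le_ceil _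
    have h2 : ((⌈2/α⌉₊ : ℕ) : ℝ) ≤ ((max 2 ⌈2/α⌉₊ : ℕ) : ℝ) := by
      exact_mod_cast le_max_right 2 ⌈2/α⌉₊
    have h3 := h1.trans h2
    calc (2:ℝ) = α * (2/α) := by field_simp
      _ ≤ α * ((max 2 ⌈2/α⌉₊ : ℕ) : ℝ) := mul_le_mul_of_nonneg_left h3 hα0.le
  set D : ℝ := (d : ℝ) with hD
  have hD2 : (2:ℝ) ≤ D := by rw [hD]; exact_mod_cast hd2
  have h2D : (1:ℝ) ≤ 2 * D := by linarith
  refine ⟨d + 4, d, hd2, ?_⟩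
  -- sets of "big" rows
  let KA : Finset (Fin (d+3)) := {⟨0, by omega⟩, ⟨2, by omega⟩}
  let KB : Finset (Fin (d+1)) := {⟨0, by omega⟩}
  let KB2 : Finset (Fin (d+1)) := {⟨0, by omega⟩, ⟨1, by omega⟩}
  let KAc : Finset (Fin (d+3) ⊕ Fin 1) :=
    {Sum.inl ⟨0, by omega⟩, Sum.inl ⟨2, by omega⟩, Sum.inr ⟨0, by omega⟩}
  let KBc : Finset (Fin (d+1) ⊕ Fin 1) := {Sum.inl ⟨0, by omega⟩, Sum.inr ⟨0, by omega⟩}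
  -- column maps
  let σA : Fin (d+3) → Fin (d+4) := fun i => ⟨i.1, by omega⟩
  let σB : Fin (d+1) → Fin (d+4) := fun i => σA (i.addNat 2)
  let σc : Fin 1 → Fin (d+4) := fun _ => ⟨d+3, by omega⟩
  let σAc : (Fin (d+3) ⊕ Fin 1) → Fin (d+4) := Sum.elim σA σc
  let σBc : (Fin (d+1) ⊕ Fin 1) → Fin (d+4) := Sum.elim σB σc
  -- scale functions
  let sA : Fin (d+3) → ℝ := fun i => if i ∈ KA then 2*D else 1
  let sB : Fin (d+1) → ℝ := fun i => if i ∈ KB then 2*D else 1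
  let sc : Fin 1 → ℝ := fun _ => 2*D
  -- matrices
  let Amat : Matrix (Fin (d+3)) (Fin (d+4)) ℝ := LNS.pat (d+4) sA σA
  let Bmat : Matrix (Fin (d+1)) (Fin (d+4)) ℝ := Matrix.of fun i => Amat (i.addNat 2)
  let cmat : Matrix (Fin 1) (Fin (d+4)) ℝ := LNS.pat (d+4) sc σc
  -- cardinalities
  have hKAcard : KA.card = 2 := by
    rw [Finset.card_insert_of_notMem (by simp [Fin.ext_iff]), Finset.card_singleton]
  have hKBcard : KB.card = 1 := Finset.card_singleton _
  have hKB2card : KB2.card = 2 := by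
    rw [Finset.card_insert_of_notMem (by simp [Fin.ext_iff]), Finset.card_singleton]
  have hKAccard : KAc.card = 3 := by
    rw [Finset.card_insert_of_notMem (by simp [Fin.ext_iff]),
      Finset.card_insert_of_notMem (by simp [Fin.ext_iff]), Finset.card_singleton]
  have hKBccard : KBc.card = 2 := by
    rw [Finset.card_insert_of_notMem (by simp [Fin.ext_iff]), Finset.card_singleton]
  -- injectivity
  have hσA : Function.Injective σA := by
    intro a b h
    exact Fin.ext (by simpa [σA] using congrArg Fin.val h)
  have hσB : Function.Injective σB := by
    intro a b h
    have := congrArg Fin.val h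
    simp [σB, σA] at this
    exact Fin.ext (by omega)
  have hσAc : Function.Injective σAc := by
    rintro (a|a) (b|b) h
    · exact congrArg Sum.inl (hσA h)
    · exfalso; have := congrArg Fin.val h; simp [σA, σc, σAc] at this; omega
    · exfalso; have := congrArg Fin.val h; simp [σA, σc, σAc] at this; omega
    · exact congrArg Sum.inr (Subsingleton.elim a b)
  have hσBc : Function.Injective σBc := by
    rintro (a|a) (b|b) h
    · exact congrArg Sum.inl (hσB h)
    · exfalso; have := congrArg Fin.val h; simp [σB, σA, σc, σBc] at this; omega
    · exfalso; have := congrArg Fin.val h; simp [σB, σA, σc, σBc] at this; omega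
    · exact congrArg Sum.inr (Subsingleton.elim a b)
  -- B as a pattern matrix
  have hsval : ∀ i : Fin (d+1), sA (i.addNat 2) = sB i := by
    intro i
    have hmem : (i.addNat 2 ∈ KA) ↔ (i ∈ KB) := by
      simp only [KA, KB, Finset.mem_insert, Finset.mem_singleton, Fin.ext_iff, Fin.val_addNat]
      omega
    simp only [sA, sB]
    exact if_congr hmem rfl rfl
  have hBeq : Bmat = LNS.pat (d+4) sB σB := by
    funext i j
    show (if j = σA (i.addNat 2) then sA (i.addNat 2) else 0) = (if j = σB i then sB i else 0)
    rw [hsval i]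
  -- elim scale functions in K-form
  have hsAc : Sum.elim sA sc = fun i => if i ∈ KAc then 2*D else 1 := by
    funext i
    rcases i with i|i
    · show sA i = _
      simp only [sA]
      refine if_congr ?_ rfl rfl
      simp [KA, KAc]
    · show 2*D = _
      have hm : Sum.inr i ∈ KAc := by
        have : i = (⟨0, by omega⟩ : Fin 1) := Subsingleton.elim _ _
        simp [KAc, this]
      rw [if_pos hm]
  have hsBc : Sum.elim sB sc = fun i => if i ∈ KBc then 2*D else 1 := by
    funext i
    rcases i with i|i
    · show sB i = _
      simp only [sB]
      refine if_congr ?_ rfl rfl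
      simp [KB, KBc]
    · show 2*D = _
      have hm : Sum.inr i ∈ KBc := by
        have : i = (⟨0, by omega⟩ : Fin 1) := Subsingleton.elim _ _
        simp [KBc, this]
      rw [if_pos hm]
  -- the six bounds
  have hAlow : Real.sqrt (D + 1) ≤ rank2Err Amat := by
    refine LNS.lower_K KA σA hσA (2*D) h2D (D+1) ?_
    rw [hKAcard, Fintype.card_fin]
    simp only [hD]
    push_cast
    norm_num [min_def]
    linarith
  have hAup : rank2Err Amat ≤ Real.sqrt (D + 1) := by
    have h := LNS.upper_K (n := d+4) KA KA (subset_refl _) (by rw [hKAcard]) σA (2*D)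
    refine h.trans (le_of_eq ?_)
    congr 1
    rw [hKAcard, Fintype.card_fin]
    simp only [hD]
    push_cast
    ring
  have hBlow : Real.sqrt (D - 1) ≤ rank2Err Bmat := by
    rw [hBeq]
    refine LNS.lower_K KB σB hσB (2*D) h2D (D-1) ?_
    rw [hKBcard, Fintype.card_fin]
    simp only [hD]
    push_cast
    have hd2R : (2:ℝ) ≤ (d:ℝ) := by exact_mod_cast hd2
    norm_num [min_def]
    nlinarith [hd2R]
  have hBup : rank2Err Bmat ≤ Real.sqrt (D - 1) := by
    rw [hBeq]
    have hsub : KB ⊆ KB2 := by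
      simp [KB, KB2, Finset.singleton_subset_iff]
    have h := LNS.upper_K (n := d+4) KB2 KB hsub (by rw [hKB2card]) σB (2*D)
    refine h.trans (le_of_eq ?_)
    congr 1
    rw [hKB2card, Fintype.card_fin]
    simp only [hD]
    push_cast
    ring
  have hAclow : Real.sqrt (4*D^2 + D + 1) ≤ rank2Err (Matrix.fromRows Amat cmat) := by
    rw [show Matrix.fromRows Amat cmat = LNS.pat (d+4) (Sum.elim sA sc) σAc from
      LNS.fromRows_pat sA sc σA σc, hsAc]
    refine LNS.lower_K KAc σAc hσAc (2*D) h2D (4*D^2 + D + 1) ?_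
    rw [hKAccard]
    have hcard : (Fintype.card (Fin (d+3) ⊕ Fin 1) : ℝ) = D + 4 := by
      simp only [Fintype.card_sum, Fintype.card_fin, hD]
      push_cast
      ring
    rw [hcard]
    have hd2R : (2:ℝ) ≤ D := hD2
    norm_num [min_def]
    nlinarith [hd2R]
  have hBcup : rank2Err (Matrix.fromRows Bmat cmat) ≤ Real.sqrt D := by
    rw [hBeq, show Matrix.fromRows (LNS.pat (d+4) sB σB) cmat
        = LNS.pat (d+4) (Sum.elim sB sc) σBc from LNS.fromRows_pat sB sc σB σc, hsBc]
    have h := LNS.upper_K (n := d+4) KBc KBc (subset_refl _) (by rw [hKBccard]) σBc (2*D)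
    refine h.trans (le_of_eq ?_)
    congr 1
    rw [hKBccard]
    have hcard : (Fintype.card (Fin (d+1) ⊕ Fin 1) : ℝ) = D + 2 := by
      simp only [Fintype.card_sum, Fintype.card_fin, hD]
      push_cast
      ring
    rw [hcard]
    ring
  -- final assembly
  refine ⟨Amat, Bmat, cmat, fun i => rfl, ?_, ?_, ?_, ?_⟩
  · exact hBup.trans ((Real.sqrt_le_sqrt (by linarith)).trans hAlow)
  · have h1 : (1-α) * rank2Err Amat ≤ (1-α) * Real.sqrt (D+1) :=
      mul_le_mul_of_nonneg_left hAup (by linarith)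
    have h2 : (1-α) * Real.sqrt (D+1) ≤ Real.sqrt (D-1) := by
      have he : (1-α) * Real.sqrt (D+1) = Real.sqrt ((1-α)^2 * (D+1)) := by
        rw [Real.sqrt_mul (sq_nonneg _), Real.sqrt_sq (by linarith)]
      rw [he]
      apply Real.sqrt_le_sqrt
      nlinarith [hdα, hD2, mul_nonneg (mul_nonneg hα0.le (by linarith : (0:ℝ) ≤ 1-α))
        (by linarith : (0:ℝ) ≤ D+1)]
    exact h1.trans (h2.trans hBlow)
  · have hpos : 0 < Real.sqrt (D+1) := Real.sqrt_pos.2 (by linarith)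
    exact mul_pos (by linarith) (hpos.trans_le hAlow)
  · refine hBcup.trans (le_trans ?_ (mul_le_mul_of_nonneg_left hAclow (by norm_num)))
    have he : (1/2:ℝ) * Real.sqrt (4*D^2 + D + 1) = Real.sqrt ((4*D^2 + D + 1)/4) := by
      rw [show (4*D^2 + D + 1)/4 = (1/2)^2 * (4*D^2 + D + 1) by ring,
        Real.sqrt_mul (sq_nonneg _), Real.sqrt_sq (by norm_num)]
    rw [he]
    apply Real.sqrt_le_sqrt
    nlinarith [hD2]
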